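/- Every finite simple graph G on n ≥ 3 vertices with minimum degree at least n/2 is Hamiltonian. -/

import Mathlib

open SimpleGraph

/-- A set of vertices is independent if no two of its vertices are adjacent. -/
def SimpleGraph.IsIndepSet' {V : Type*} (G : SimpleGraph V) (s : Set V) : Prop :=
  s.Pairwise fun u v => ¬ G.Adj u v

/-- The independence number `α(G)`: the maximum size of an independent set. -/
noncomputable def SimpleGraph.indepNum' {V : Type*} (G : SimpleGraph V) [Fintype V] : ℕ :=
  sSup {n | ∃ s : Finset V, G.IsIndepSet' ↑s ∧ s.card = n}

/-- `G` is `k`-connected: `G` has more than `k` vertices and deleting any set of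
fewer than `k` vertices leaves a connected graph. -/
def SimpleGraph.IsKConnected {V : Type*} (G : SimpleGraph V) [Fintype V] (k : ℕ) : Prop :=
  k < Fintype.card V ∧ ∀ s : Set V, s.ncard < k → (G.induce sᶜ).Connected

/-- The connectivity `κ(G)`: the largest `k` such that `G` is `k`-connected. -/
noncomputable def SimpleGraph.connectivity' {V : Type*} (G : SimpleGraph V) [Fintype V] : ℕ :=
  sSup {k | G.IsKConnected k}

/-- `σ_k(G)`: the minimum degree sum over independent sets of size `k`
(`⊤` if there is no such set). -/
noncomputable def SimpleGraph.sigmaDeg {V : Type*} (G : SimpleGraph V) [Fintype V]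
    (k : ℕ) : ℕ∞ := by
  classical
  exact ⨅ s ∈ {s : Finset V | G.IsIndepSet' ↑s ∧ s.card = k}, (∑ x ∈ s, G.degree x : ℕ∞)

set_option linter.unusedSectionVars false
set_option maxHeartbeats 1000000

namespace DiracAux

variable {V : Type*} [DecidableEq V] {G : SimpleGraph V}

/-- Consecutive pairs of a list, as `Sym2`s. -/
def chainPairs (l : List V) : List (Sym2 V) := List.zipWith (fun a b => s(a, b)) l l.tail

@[simp] lemma chainPairs_nil : chainPairs ([] : List V) = [] := rfl
@[simp] lemma chainPairs_single (a : V) : chainPairs [a] = [] := rfl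
@[simp] lemma chainPairs_cons_cons (a b : V) (l : List V) :
    chainPairs (a :: b :: l) = s(a, b) :: chainPairs (b :: l) := rfl

lemma mem_of_mem_chainPairs {a b : V} : ∀ {l : List V}, s(a, b) ∈ chainPairs l →
    a ∈ l ∧ b ∈ l
  | [], h => by simp [chainPairs] at h
  | [x], h => by simp [chainPairs] at h
  | x :: y :: l, h => by
    rw [chainPairs_cons_cons, List.mem_cons] at h
    rcases h with h | h
    · rw [Sym2.eq_iff] at h
      rcases h with ⟨rfl, rfl⟩ | ⟨rfl, rfl⟩ <;> simp
    · have := mem_of_mem_chainPairs h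
      exact ⟨List.mem_cons_of_mem _ this.1, List.mem_cons_of_mem _ this.2⟩

lemma chainPairs_append_singleton (u : V) : ∀ (t : List V) (h : t ≠ []),
    chainPairs (t ++ [u]) = chainPairs t ++ [s(t.getLast h, u)]
  | [], h => absurd rfl h
  | [a], _ => by simp
  | a :: b :: t, _ => by
    have h1 := chainPairs_append_singleton u (b :: t) (by simp)
    calc chainPairs ((a :: b :: t) ++ [u]) = s(a, b) :: chainPairs ((b :: t) ++ [u]) := rfl
      _ = s(a, b) :: (chainPairs (b :: t) ++ [s((b :: t).getLast (by simp), u)]) := by rw [h1]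
      _ = chainPairs (a :: b :: t) ++ [s(((a :: b :: t)).getLast (by simp), u)] := by
          simp [List.getLast_cons]

/-- Build a walk from `u` to `v` through the intermediate list `l`. -/
def listToWalk (G : SimpleGraph V) : (u v : V) → (l : List V) →
    (h : List.Chain G.Adj u (l ++ [v])) → G.Walk u v
  | _, _, [], h => Walk.cons (List.chain_cons.mp h).1 Walk.nil
  | u, v, a :: l, h =>
    Walk.cons (List.chain_cons.mp h).1 (listToWalk G a v l (List.chain_cons.mp h).2)

lemma support_listToWalk (G : SimpleGraph V) : ∀ (u v : V) (l : List V)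
    (h : List.Chain G.Adj u (l ++ [v])), (listToWalk G u v l h).support = u :: (l ++ [v])
  | _, _, [], _ => rfl
  | u, v, a :: l, h => by
    simp only [listToWalk, Walk.support_cons, support_listToWalk, List.cons_append]
    congr 1; exact support_listToWalk G a v l _

lemma edges_listToWalk (G : SimpleGraph V) : ∀ (u v : V) (l : List V)
    (h : List.Chain G.Adj u (l ++ [v])),
    (listToWalk G u v l h).edges = chainPairs (u :: (l ++ [v]))
  | _, _, [], _ => rfl
  | u, v, a :: l, h => by
    simp only [listToWalk, Walk.edges_cons, edges_listToWalk, List.cons_append,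
      chainPairs_cons_cons]
    congr 1; exact edges_listToWalk G a v l _

lemma getLast_ne_head {l : List V} (hl : l.Nodup) (h2 : 2 ≤ l.length) (hne : l ≠ []) :
    l.getLast hne ≠ l.head hne := by
  rw [List.getLast_eq_getElem, List.head_eq_getElem_zero]
  intro h
  rw [hl.getElem_inj_iff] at h
  omega

/-- A cyclic list of all vertices gives a Hamiltonian cycle. -/
lemma hamiltonian_of_list [Fintype V] {G : SimpleGraph V} (c : List V)
    (hlen : 3 ≤ c.length) (hchain : c.Chain' G.Adj)
    (hnodup : c.Nodup) (hall : ∀ x : V, x ∈ c)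
    (hclose : G.Adj (c.getLast (by rintro rfl; simp at hlen)) (c.head (by rintro rfl; simp at hlen))) :
    G.IsHamiltonian := by
  intro _
  have hcne : c ≠ [] := by rintro rfl; simp at hlen
  obtain ⟨u, t, rfl⟩ : ∃ u t, c = u :: t := ⟨c.head hcne, c.tail, (List.cons_head_tail hcne).symm⟩
  obtain ⟨b, t', rfl⟩ : ∃ b t', t = b :: t' := by
    cases t with
    | nil => simp at hlen
    | cons b t' => exact ⟨b, t', rfl⟩
  have htne : (b :: t') ≠ [] := by simp
  have hunott : u ∉ b :: t' := (List.nodup_cons.mp hnodup).1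
  have htnd : (b :: t').Nodup := (List.nodup_cons.mp hnodup).2
  have hch : List.Chain' G.Adj ((u :: b :: t') ++ [u]) := by
    apply List.IsChain.append hchain (by simp)
    intro x hx y hy
    simp only [List.head?_cons, Option.mem_some_iff] at hy
    rw [List.getLast?_eq_getLast (l := u :: b :: t') (by simp), Option.mem_some_iff] at hx
    subst hx; subst hy
    exact hclose
  have hch2 : List.Chain G.Adj u ((b :: t') ++ [u]) := hch
  rw [List.cons_append, List.Chain, List.chain_cons] at hch2
  have h1 : G.Adj u b := hch2.1
  have hP : List.Chain G.Adj b (t' ++ [u]) := hch2.2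
  set P := listToWalk G b u t' hP with hPdef
  have hsup : P.support = (b :: t') ++ [u] := by
    rw [hPdef, support_listToWalk]; rfl
  have hPpath : P.IsPath := by
    rw [Walk.isPath_def, hsup]
    exact List.Nodup.append htnd (List.nodup_singleton u)
      (by intro x hx hx2; simp only [List.mem_singleton] at hx2; subst hx2; exact hunott hx)
  have hbne : b ≠ (b :: t').getLast htne := by
    have := getLast_ne_head htnd (by simpa using hlen) htne
    simpa [List.head_cons, eq_comm] using this
  have hedge : s(u, b) ∉ P.edges := by
    rw [hPdef, edges_listToWalk]
    have : (b :: (t' ++ [u])) = (b :: t') ++ [u] := by simp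
    rw [this, chainPairs_append_singleton u (b :: t') htne]
    simp only [List.mem_append, List.mem_singleton]
    rintro (h | h)
    · exact hunott (mem_of_mem_chainPairs h).1
    · rw [Sym2.eq_iff] at h
      rcases h with ⟨h1', h2'⟩ | ⟨-, h2'⟩
      · exact hunott (h1' ▸ List.getLast_mem htne)
      · exact hbne h2'
  have hcyc : (Walk.cons h1 P).IsCycle := by
    rw [Walk.cons_isCycle_iff]
    exact ⟨hPpath, hedge⟩
  refine ⟨u, Walk.cons h1 P, ?_⟩
  rw [Walk.isHamiltonianCycle_iff_isCycle_and_support_count_tail_eq_one]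
  refine ⟨hcyc, fun a => ?_⟩
  rw [Walk.support_cons, List.tail_cons, hsup]
  rcases eq_or_ne a u with rfl | hau
  · rw [List.count_append]
    rw [List.count_eq_zero.mpr hunott]
    simp
  · have hat : a ∈ b :: t' := by
      have := hall a
      simp only [List.mem_cons] at this ⊢
      tauto
    rw [List.count_append, List.count_eq_one_of_mem htnd hat]
    simp [hau, List.count_eq_zero]



theorem dirac {V : Type*} [Fintype V] [DecidableEq V] (G : SimpleGraph V) [DecidableRel G.Adj]
    (hn : 3 ≤ Fintype.card V)
    (hdeg : ∀ v : V, Fintype.card V ≤ 2 * G.degree v) :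
    G.IsHamiltonian := by
  classical
  have hnemp : Nonempty V := Fintype.card_pos_iff.mp (by omega)
  set n := Fintype.card V with hn0
  set S : Set ℕ := {m | ∃ l : List V, l.Chain' G.Adj ∧ l.Nodup ∧ l.length = m} with hSdef
  have hS1 : (1 : ℕ) ∈ S :=
    ⟨[Classical.arbitrary V], List.isChain_singleton _, List.nodup_singleton _, rfl⟩
  have hbdd : ∀ m ∈ S, m ≤ n := by rintro m ⟨l, -, hnd, rfl⟩; exact hnd.length_le_card
  have hkmem : sSup S ∈ S := Nat.sSup_mem ⟨1, hS1⟩ ⟨n, fun m hm => hbdd m hm⟩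
  set k := sSup S with hkdef
  have hkmax : ∀ m ∈ S, m ≤ k := fun m hm => le_csSup ⟨n, fun m hm => hbdd m hm⟩ hm
  obtain ⟨l, hchain, hnodup, hlen⟩ := hkmem
  have hk1 : 1 ≤ k := hkmax 1 hS1
  have hkn : k ≤ n := hbdd k ⟨l, hchain, hnodup, hlen⟩
  have hlne : l ≠ [] := by intro h; rw [h] at hlen; simp at hlen; omega
  -- all neighbors of the head lie on the path
  have hnbu : ∀ x, G.Adj (l.head hlne) x → x ∈ l := by
    intro x hadj
    by_contra hx
    have hmem : (k+1) ∈ S := by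
      refine ⟨x :: l, List.isChain_cons.mpr ⟨fun y hy => ?_, hchain⟩,
        List.nodup_cons.mpr ⟨hx, hnodup⟩, by simp [hlen]⟩
      rw [List.head?_eq_head hlne, Option.mem_some_iff] at hy
      exact hy ▸ hadj.symm
    have := hkmax _ hmem; omega
  -- all neighbors of the last vertex lie on the path
  have hnbv : ∀ x, G.Adj (l.getLast hlne) x → x ∈ l := by
    intro x hadj
    by_contra hx
    have hch : (l ++ [x]).Chain' G.Adj := by
      refine List.IsChain.append hchain (List.isChain_singleton _) ?_
      intro a ha b hb
      rw [List.getLast?_eq_getLast_of_ne_nil hlne, Option.mem_some_iff] at ha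
      simp only [List.head?_cons, Option.mem_some_iff] at hb
      subst ha; subst hb; exact hadj
    have hmem : (k+1) ∈ S :=
      ⟨l ++ [x], hch,
        List.Nodup.append hnodup (List.nodup_singleton _)
          (by intro a ha hb; simp only [List.mem_singleton] at hb; subst hb; exact hx ha),
        by simp [hlen]⟩
    have := hkmax _ hmem; omega
  have hllen : l.length = k := hlen
  set u := l.head hlne with hu
  set v := l.getLast hlne with hv
  set d : ℕ → V := fun i => l.getD i u with hd
  have hdget : ∀ i (h : i < k), d i = l[i]'(by omega) := by
    intro i h; exact List.getD_eq_getElem l u (by omega)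
  have hdinj : ∀ a b, a < k → b < k → d a = d b → a = b := by
    intro a b ha hb hab
    rw [hdget a ha, hdget b hb] at hab
    exact hnodup.getElem_inj_iff.mp hab
  -- the two index sets
  set A : Finset ℕ := (Finset.range (k-1)).filter (fun i => G.Adj u (d (i+1))) with hA
  set B : Finset ℕ := (Finset.range k).filter (fun i => G.Adj v (d i)) with hB
  have hAcard : A.card = G.degree u := by
    rw [← card_neighborFinset_eq_degree]
    apply Finset.card_bij (fun i _ => d (i+1))
    · intro a ha
      simp only [hA, Finset.mem_filter, Finset.mem_range] at ha
      rw [mem_neighborFinset]; exact ha.2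
    · intro a ha b hb hab
      simp only [hA, Finset.mem_filter, Finset.mem_range] at ha hb
      have := hdinj _ _ (by omega) (by omega) hab
      omega
    · intro x hx
      rw [mem_neighborFinset] at hx
      obtain ⟨j, hj, rfl⟩ := List.mem_iff_getElem.mp (hnbu x hx)
      have hj0 : j ≠ 0 := by
        rintro rfl
        rw [← List.head_eq_getElem hlne] at hx
        exact G.loopless.irrefl _ hx
      refine ⟨j - 1, ?_, ?_⟩
      · simp only [hA, Finset.mem_filter, Finset.mem_range]
        constructor
        · omega
        · rw [hdget _ (by omega)]
          convert hx using 2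
          omega
      · rw [hdget _ (by omega)]
        congr 1
        omega
  have hBcard : B.card = G.degree v := by
    rw [← card_neighborFinset_eq_degree]
    apply Finset.card_bij (fun i _ => d i)
    · intro a ha
      simp only [hB, Finset.mem_filter, Finset.mem_range] at ha
      rw [mem_neighborFinset]; exact ha.2
    · intro a ha b hb hab
      simp only [hB, Finset.mem_filter, Finset.mem_range] at ha hb
      exact hdinj _ _ (by omega) (by omega) hab
    · intro x hx
      rw [mem_neighborFinset] at hx
      obtain ⟨j, hj, rfl⟩ := List.mem_iff_getElem.mp (hnbv x hx)
      refine ⟨j, ?_, ?_⟩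
      · simp only [hB, Finset.mem_filter, Finset.mem_range]
        exact ⟨by omega, by rw [hdget _ (by omega)]; exact hx⟩
      · rw [hdget _ (by omega)]
  have hBsub : B ⊆ Finset.range (k-1) := by
    intro i hi
    simp only [hB, Finset.mem_filter, Finset.mem_range] at hi
    rw [Finset.mem_range]
    rcases hi with ⟨hik, hadj⟩
    by_contra h
    have hieq : i = k - 1 := by omega
    subst hieq
    have : d (k-1) = v := by
      rw [hdget _ (by omega), hv, List.getLast_eq_getElem]
      congr 1
      omega
    rw [this] at hadj
    exact G.loopless.irrefl _ hadj
  have hAsub : A ⊆ Finset.range (k-1) := Finset.filter_subset _ _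
  have hABcard : (A ∪ B).card ≤ k - 1 := by
    have := Finset.card_le_card (Finset.union_subset hAsub hBsub)
    simpa using this
  have hsum : n ≤ A.card + B.card := by
    rw [hAcard, hBcard]
    have h1 := hdeg u; have h2 := hdeg v
    omega
  have hint : (A ∩ B).Nonempty := by
    rw [← Finset.card_pos]
    have := Finset.card_union_add_card_inter A B
    omega
  obtain ⟨i, hiAB⟩ := hint
  rw [Finset.mem_inter] at hiAB
  obtain ⟨hiA, hiB⟩ := hiAB
  simp only [hA, hB, Finset.mem_filter, Finset.mem_range] at hiA hiB
  obtain ⟨hi1, hadjA⟩ := hiA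
  obtain ⟨-, hadjB⟩ := hiB
  have hik : i + 1 < k := by omega
  -- the cycle list
  set c : List V := l.take (i+1) ++ (l.drop (i+1)).reverse with hcdef
  have htake_ne : l.take (i+1) ≠ [] := by
    intro h; have := congrArg List.length h; simp [hllen] at this; omega
  have hdrop_ne : l.drop (i+1) ≠ [] := by
    intro h; have := congrArg List.length h; simp [hllen] at this; omega
  have hcperm : c.Perm l := by
    have h1 : (l.take (i+1) ++ (l.drop (i+1)).reverse).Perm (l.take (i+1) ++ l.drop (i+1)) :=
      List.Perm.append_left _ (List.reverse_perm _)
    rw [List.take_append_drop] at h1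
    exact h1
  have hcnd : c.Nodup := hcperm.nodup_iff.mpr hnodup
  have hclen : c.length = k := by rw [hcperm.length_eq, hllen]
  have hcne : c ≠ [] := by intro h; rw [h] at hclen; simp at hclen; omega
  have hflip : flip G.Adj = G.Adj := funext fun a => funext fun b => propext (G.adj_comm b a)
  have hcchain : c.Chain' G.Adj := by
    refine List.IsChain.append (hchain.take _) ?_ ?_
    · rw [List.isChain_reverse]
      exact (hchain.drop _).imp fun a b h => h.symm
    · intro a ha b hb
      rw [List.getLast?_eq_getLast_of_ne_nil htake_ne, Option.mem_some_iff] at ha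
      rw [List.head?_reverse, List.getLast?_eq_getLast_of_ne_nil hdrop_ne,
        Option.mem_some_iff] at hb
      subst ha; subst hb
      rw [List.getLast_take, List.getLast_drop]
      simp only [Nat.add_sub_cancel]
      rw [List.getElem?_eq_getElem (by omega : i < l.length)]
      simp only [Option.getD_some]
      rw [← hdget i (by omega)]
      exact hadjB.symm
  have hchead : c.head hcne = u := by
    have h1 : c.head? = some u := by
      rw [hcdef, List.head?_append, List.head?_eq_head htake_ne, Option.some_or, List.head_take]
    rwa [List.head?_eq_head hcne, Option.some_inj] at h1
  have hi1l : i + 1 < l.length := by omega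
  have hclast : c.getLast hcne = l[i+1]'hi1l := by
    have h1 : c.getLast? = some (l[i+1]'hi1l) := by
      rw [hcdef, List.getLast?_append,
        List.getLast?_eq_getLast_of_ne_nil (by simpa using hdrop_ne : (l.drop (i+1)).reverse ≠ []),
        Option.some_or, List.getLast_reverse, List.head_drop]
    rwa [List.getLast?_eq_getLast_of_ne_nil hcne, Option.some_inj] at h1
  have hclosing : G.Adj (c.getLast hcne) (c.head hcne) := by
    have h2 : G.Adj (l[i+1]'hi1l) u := by
      rw [← hdget _ (by omega)]; exact hadjA.symm
    rw [hchead, hclast]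
    exact h2
  by_cases hall : ∀ x : V, x ∈ c
  · -- the cycle covers everything
    have hcover : n ≤ c.length := by
      have huniv : Finset.univ ⊆ c.toFinset := fun x _ => List.mem_toFinset.mpr (hall x)
      have := Finset.card_le_card huniv
      rw [List.toFinset_card_of_nodup hcnd, Finset.card_univ] at this
      exact this
    exact hamiltonian_of_list c (by omega) hcchain hcnd hall hclosing
  · -- extend through a vertex off the cycle: contradiction with maximality
    push_neg at hall
    obtain ⟨x, hx⟩ := hall
    have hxy : ∃ y ∈ c, G.Adj x y := by
      by_contra hno
      push_neg at hno
      have hdegx : G.degree x ≤ n - (k+1) := by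
        rw [← card_neighborFinset_eq_degree]
        have hsub : G.neighborFinset x ⊆ (insert x c.toFinset)ᶜ := by
          intro y hy
          rw [mem_neighborFinset] at hy
          rw [Finset.mem_compl, Finset.mem_insert]
          push_neg
          exact ⟨fun h => G.loopless.irrefl x (h ▸ hy), fun h => hno y (List.mem_toFinset.mp h) hy⟩
        have := Finset.card_le_card hsub
        rw [Finset.card_compl, Finset.card_insert_of_notMem (fun h => hx (List.mem_toFinset.mp h)),
          List.toFinset_card_of_nodup hcnd, hclen] at this
        exact this
      have hdegu : G.degree u ≤ k - 1 := by
        rw [← card_neighborFinset_eq_degree]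
        have hsub : G.neighborFinset u ⊆ c.toFinset.erase u := by
          intro y hy
          rw [mem_neighborFinset] at hy
          rw [Finset.mem_erase]
          exact ⟨fun h => G.loopless.irrefl u (h ▸ hy),
            List.mem_toFinset.mpr (hcperm.mem_iff.mpr (hnbu y hy))⟩
        have := Finset.card_le_card hsub
        rw [Finset.card_erase_of_mem
          (List.mem_toFinset.mpr (hcperm.mem_iff.mpr (List.head_mem hlne))),
          List.toFinset_card_of_nodup hcnd, hclen] at this
        exact this
      have h1 := hdeg x; have h2 := hdeg u
      have hk1n : k + 1 ≤ n := by
        have : (insert x c.toFinset).card ≤ n := by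
          rw [hn0, ← Finset.card_univ]; exact Finset.card_le_card (Finset.subset_univ _)
        rw [Finset.card_insert_of_notMem (fun h => hx (List.mem_toFinset.mp h)),
          List.toFinset_card_of_nodup hcnd, hclen] at this
        exact this
      omega
    obtain ⟨y, hyc, hxyadj⟩ := hxy
    obtain ⟨j, hj, rfl⟩ := List.mem_iff_getElem.mp hyc
    have hjk : j < k := by omega
    set l' : List V := c.drop (j+1) ++ (c.take (j+1) ++ [x]) with hl'
    have hctake_ne : c.take (j+1) ≠ [] := by
      intro h; have := congrArg List.length h; simp [hclen] at this; omega
    have hl'chain : l'.Chain' G.Adj := by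
      refine List.IsChain.append (hcchain.drop _) (List.IsChain.append (hcchain.take _)
        (List.isChain_singleton _) ?_) ?_
      · intro a ha b hb
        rw [List.getLast?_eq_getLast_of_ne_nil hctake_ne, Option.mem_some_iff] at ha
        simp only [List.head?_cons, Option.mem_some_iff] at hb
        subst ha; subst hb
        rw [List.getLast_take]
        simp only [Nat.add_sub_cancel]
        rw [List.getElem?_eq_getElem (by omega : j < c.length)]
        simp only [Option.getD_some]
        exact hxyadj.symm
      · intro a ha b hb
        have hcdrop_ne : c.drop (j+1) ≠ [] := by
          intro h; rw [h] at ha; simp at ha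
        rw [List.getLast?_eq_getLast_of_ne_nil hcdrop_ne, Option.mem_some_iff] at ha
        rw [List.head?_append, List.head?_eq_head hctake_ne, Option.some_or,
          Option.mem_some_iff] at hb
        subst ha; subst hb
        rw [List.getLast_drop, List.head_take]
        exact hclosing
    have hl'nodup : l'.Nodup := by
      have h1 : (c.drop (j+1) ++ c.take (j+1)).Perm c := by
        have h2 := List.perm_append_comm (l₁ := c.drop (j+1)) (l₂ := c.take (j+1))
        rwa [List.take_append_drop] at h2
      have hperm : l'.Perm (c ++ [x]) := by
        rw [hl', ← List.append_assoc]
        exact h1.append_right [x]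
      refine hperm.nodup_iff.mpr ?_
      exact List.Nodup.append hcnd (List.nodup_singleton _)
        (by intro a ha hb; simp only [List.mem_singleton] at hb; subst hb; exact hx ha)
    have hl'len : l'.length = k + 1 := by
      rw [hl']
      simp only [List.length_append, List.length_drop, List.length_take,
        List.length_singleton, hclen]
      omega
    have hmem : (k+1) ∈ S := ⟨l', hl'chain, hl'nodup, hl'len⟩
    have := hkmax _ hmem
    omega
end DiracAux

/-- Dirac's theorem: a graph on `n ≥ 3` vertices with minimum degree at least `n/2`
is Hamiltonian. -/
theorem stmt_1 {V : Type*} [Fintype V] [DecidableEq V] (G : SimpleGraph V) [DecidableRel G.Adj]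
    (hn : 3 ≤ Fintype.card V)
    (hdeg : ∀ v : V, Fintype.card V ≤ 2 * G.degree v) :
    G.IsHamiltonian :=
  DiracAux.dirac G hn hdeg
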